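/- arXiv:2011.14119 — 4 statements merged into one kernel-verified Lean document; each statement's English description precedes it below -/
import Mathlib

section
/- Let n ≥ q ≥ 2 be integers with q ≤ n - 1 (so n > q) and n + q odd. Then Σ_{k=0}^{⌊(n-1)/2⌋} (-1)^k * C(n,k) * (n-2k)^{q-1} = 0. -/
open Finset

open Polynomial in
lemma fwdDiff_iter_eval_eq_zero (n : ℕ) : ∀ p : Polynomial ℤ, p.natDegree < n →
    (fwdDiff (1 : ℤ))^[n] (fun x : ℤ ↦ p.eval x) = 0 := by
  induction n with
  | zero => intro p hp; omega
  | succ n IH =>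
    intro p hp
    have step : fwdDiff (1:ℤ) (fun x : ℤ ↦ p.eval x)
        = fun x : ℤ ↦ (p.comp (X + C 1) - p).eval x := by
      funext x; simp [fwdDiff, eval_comp]
    rw [Function.iterate_succ_apply, step]
    rcases eq_or_ne (p.comp (X + C 1) - p) 0 with h0 | h0
    · rw [h0]
      have : (fun x : ℤ ↦ (0 : Polynomial ℤ).eval x) = fun _ : ℤ ↦ (0:ℤ) := by
        funext x; simp
      rw [this]
      have hfix : fwdDiff (1:ℤ) (fun _ : ℤ ↦ (0:ℤ)) = fun _ : ℤ ↦ (0:ℤ) := by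
        funext x; simp [fwdDiff]
      rw [Function.iterate_fixed hfix n]
      funext x; rfl
    · apply IH
      -- p is nonconstant (else the difference would be 0)
      have hpne : p ≠ 0 := by
        rintro rfl; simp at h0
      have hdp : p.natDegree ≠ 0 := by
        intro h
        obtain ⟨c, rfl⟩ := Polynomial.natDegree_eq_zero.mp h
        simp at h0
      have hX1 : (X + C (1:ℤ)).natDegree = 1 := natDegree_X_add_C 1
      have hlc : (p.comp (X + C 1)).leadingCoeff = p.leadingCoeff := by
        rw [leadingCoeff_comp (by rw [hX1]; norm_num)]
        have : (X + C (1:ℤ)).leadingCoeff = 1 := (monic_X_add_C 1).leadingCoeff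
        rw [this, one_pow, mul_one]
      have hcompne : p.comp (X + C 1) ≠ 0 := by
        intro h
        apply hpne
        rw [← leadingCoeff_eq_zero, ← hlc, h, leadingCoeff_zero]
      have hnd : (p.comp (X + C 1)).natDegree = p.natDegree := by
        rw [natDegree_comp, hX1, mul_one]
      have hdeg : (p.comp (X + C 1)).degree = p.degree := by
        rw [degree_eq_natDegree hcompne, degree_eq_natDegree hpne, hnd]
      have hlt : (p.comp (X + C 1) - p).degree < (p.comp (X + C 1)).degree :=
        degree_sub_lt hdeg hcompne hlc
      have := Polynomial.natDegree_lt_natDegree h0 hlt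
      omega

open Polynomial in
lemma full_alternating_sum_zero (n m : ℕ) (hm : m < n) :
    ∑ k ∈ Finset.range (n + 1),
      (-1 : ℤ) ^ k * (n.choose k : ℤ) * ((n : ℤ) - 2 * k) ^ m = 0 := by
  set p : Polynomial ℤ := (C (n:ℤ) - 2 * X) ^ m with hpdef
  have hdeg : p.natDegree < n := by
    have h1 : (C (n:ℤ) - 2 * X).natDegree ≤ 1 := by
      apply le_trans (natDegree_sub_le _ _)
      simp only [natDegree_C, max_le_iff]
      exact ⟨Nat.zero_le 1, le_trans natDegree_mul_le (by simp)⟩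
    calc p.natDegree ≤ m * 1 := le_trans (natDegree_pow_le) (by
          exact Nat.mul_le_mul_left m h1)
      _ < n := by omega
  have h := fwdDiff_iter_eq_sum_shift (1:ℤ) (fun x : ℤ ↦ p.eval x) n 0
  rw [fwdDiff_iter_eval_eq_zero n p hdeg] at h
  have h0 : (0 : ℤ) = ∑ k ∈ Finset.range (n + 1),
      ((-1:ℤ) ^ (n - k) * (n.choose k : ℤ)) * ((n : ℤ) - 2 * k) ^ m := by
    rw [show (0:ℤ) = (0 : ℤ → ℤ) 0 from rfl, h]
    apply Finset.sum_congr rfl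
    intro k hk
    rw [smul_eq_mul]
    congr 1
    simp [hpdef]
  have key : ∑ k ∈ Finset.range (n + 1),
      (-1 : ℤ) ^ k * (n.choose k : ℤ) * ((n : ℤ) - 2 * k) ^ m
      = (-1:ℤ)^n * ∑ k ∈ Finset.range (n + 1),
      ((-1:ℤ) ^ (n - k) * (n.choose k : ℤ)) * ((n : ℤ) - 2 * k) ^ m := by
    rw [Finset.mul_sum]
    apply Finset.sum_congr rfl
    intro k hk
    have hk' : k ≤ n := by
      have := Finset.mem_range.mp hk; omega
    have hsign : (-1:ℤ)^n * (-1:ℤ)^(n-k) = (-1:ℤ)^k := by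
      rw [← pow_add, show n + (n - k) = k + 2 * (n - k) by omega, pow_add, pow_mul]
      simp
    calc (-1 : ℤ) ^ k * (n.choose k : ℤ) * ((n : ℤ) - 2 * k) ^ m
        = ((-1:ℤ)^n * (-1:ℤ)^(n-k)) * (n.choose k : ℤ) * ((n : ℤ) - 2 * k) ^ m := by
          rw [hsign]
      _ = (-1:ℤ)^n * ((-1:ℤ) ^ (n - k) * (n.choose k : ℤ) * ((n : ℤ) - 2 * k) ^ m) := by
          ring
  rw [key, ← h0, mul_zero]

theorem alternating_binomial_sum_eq_zero (n q : ℕ) (hq : 2 ≤ q) (hqn : q + 1 ≤ n)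
    (hodd : Odd (n + q)) :
    ∑ k ∈ Finset.range ((n - 1) / 2 + 1),
      (-1 : ℤ) ^ k * (n.choose k : ℤ) * ((n : ℤ) - 2 * k) ^ (q - 1) = 0 := by
  set g : ℕ → ℤ := fun k ↦ (-1 : ℤ) ^ k * (n.choose k : ℤ) * ((n : ℤ) - 2 * k) ^ (q - 1)
    with hg
  set H : ℕ := (n - 1) / 2 + 1 with hH
  set K : ℕ := n + 1 - H with hK
  have hpar := Nat.odd_iff.mp hodd
  have hHK : H + K = n + 1 := by omega
  have key : ∀ j, j ≤ n → g (n - j) = g j := by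
    intro j hj
    have hcast : ((n - j : ℕ) : ℤ) = (n : ℤ) - j := by
      push_cast [hj]; ring
    have hchoose : n.choose (n - j) = n.choose j := Nat.choose_symm hj
    rw [hg]
    simp only [hchoose, hcast]
    have h1 : ((n:ℤ) - 2 * ((n:ℤ) - j)) = -((n:ℤ) - 2 * j) := by ring
    rw [h1, neg_pow ((n:ℤ) - 2 * (j:ℤ)) (q - 1)]
    have h2 : (-1:ℤ)^(n-j) * ((-1:ℤ)^(q-1)) = (-1:ℤ)^j := by
      rw [← pow_add, neg_one_pow_eq_pow_mod_two, show (n - j + (q-1)) % 2 = j % 2 by omega,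
        ← neg_one_pow_eq_pow_mod_two]
    calc (-1:ℤ)^(n-j) * (n.choose j : ℤ) * ((-1:ℤ)^(q-1) * ((n:ℤ) - 2*j)^(q-1))
        = ((-1:ℤ)^(n-j) * (-1:ℤ)^(q-1)) * (n.choose j : ℤ) * ((n:ℤ) - 2*j)^(q-1) := by ring
      _ = (-1:ℤ)^j * (n.choose j : ℤ) * ((n:ℤ) - 2*j)^(q-1) := by rw [h2]
  have hfull : ∑ k ∈ Finset.range (n + 1), g k = 0 :=
    full_alternating_sum_zero n (q - 1) (by omega)
  have hsplit : ∑ k ∈ Finset.range H, g k + ∑ k ∈ Finset.Ico H (n+1), g k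
      = ∑ k ∈ Finset.range (n + 1), g k :=
    Finset.sum_range_add_sum_Ico g (by omega)
  have h2 : ∑ k ∈ Finset.Ico H (n+1), g k = ∑ j ∈ Finset.range K, g (H + j) := by
    rw [Finset.sum_Ico_eq_sum_range]
  have h3 : ∑ j ∈ Finset.range K, g (H + j) = ∑ j ∈ Finset.range K, g (n - j) := by
    rw [← Finset.sum_range_reflect (fun j ↦ g (H + j)) K]
    apply Finset.sum_congr rfl
    intro j hj
    have hjK : j < K := Finset.mem_range.mp hj
    congr 1
    omega
  have h4 : ∑ j ∈ Finset.range K, g (n - j) = ∑ j ∈ Finset.range K, g j := by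
    apply Finset.sum_congr rfl
    intro j hj
    exact key j (by have := Finset.mem_range.mp hj; omega)
  rcases Nat.even_or_odd n with hne | hno
  · -- n even: K = H + 1 and n = 2 * H, middle term g H = 0
    have hKH : K = H + 1 ∧ n = 2 * H := by
      obtain ⟨t, rfl⟩ := hne
      constructor <;> omega
    have hgH : g H = 0 := by
      rw [hg]
      have : ((n:ℤ) - 2 * H) = 0 := by
        have := hKH.2
        push_cast [this]
        ring
      simp only [this]
      rw [zero_pow (by omega)]
      ring
    rw [h2, h3, h4, hKH.1, Finset.sum_range_succ g H, hgH, add_zero, hfull] at hsplit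
    linarith
  · -- n odd: K = H
    have hKH : K = H := by
      obtain ⟨t, rfl⟩ := hno
      omega
    rw [h2, h3, h4, hKH, hfull] at hsplit
    linarith
end

section
/- For q = 1 and any nonzero real α, ∫_ε^∞ e^{iαx}/x dx = E_ε(α), i.e., the formula of the key lemma holds with c_1 = 0 and remainder zero; more generally, for every integer q ≥ 1, every ε > 0, and every nonzero real α, ∫_ε^∞ (e^{iαx} − P_{q-2}(iαx))/x^q dx = c_q α^{q-1} + (iα)^{q-1}/(q-1)! · E_ε(α) + ω_q(ε, α), where ω_q(ε, α) → 0 as ε → 0⁺, c_q = i^{q-1}/(q-1)! · Σ_{k=0}^{q-2} 1/(k+1) for q ≥ 2 and c_1 = 0. -/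
open Filter Finset Complex

/-- `P m z = ∑_{k=0}^{m-1} z^k/k!`; thus `P (m+1)` is the Maclaurin polynomial of `exp`
of order `m`, and `P 0 = 0` encodes the convention `P_{-1} = 0`. -/
noncomputable def P (m : ℕ) (z : ℂ) : ℂ := ∑ k ∈ Finset.range m, z ^ k / (k.factorial : ℂ)

/-- `c q = i^{q-1}/(q-1)! ∑_{k=0}^{q-2} 1/(k+1)`, with `c 1 = 0`. -/
noncomputable def c (q : ℕ) : ℂ :=
  Complex.I ^ (q - 1) / ((q - 1).factorial : ℂ) * ∑ k ∈ Finset.range (q - 1), 1 / ((k : ℂ) + 1)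

lemma hasDerivAt_P_comp (m : ℕ) (a : ℂ) (z : ℂ) :
    HasDerivAt (fun z : ℂ => P (m+1) (a*z)) (a * P m (a*z)) z := by
  have h : HasDerivAt (fun z : ℂ => P (m+1) (a*z))
      (∑ k ∈ Finset.range (m+1), a^k * ((k : ℂ) * z ^ (k-1)) / (k.factorial : ℂ)) z := by
    unfold P
    simp only [mul_pow]
    apply HasDerivAt.fun_sum
    intro k _
    exact (((hasDerivAt_pow k z).const_mul (a^k)).div_const (k.factorial : ℂ))
  convert h using 1
  rw [Finset.sum_range_succ']
  simp only [Nat.cast_zero, zero_mul, mul_zero, zero_div, add_zero]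
  unfold P
  rw [Finset.mul_sum]
  apply Finset.sum_congr rfl
  intro k _
  rw [Nat.factorial_succ]
  push_cast
  rw [mul_pow]
  have hk : ((k:ℂ)+1) ≠ 0 := Nat.cast_add_one_ne_zero k
  have hf : (k.factorial:ℂ) ≠ 0 := Nat.cast_ne_zero.2 k.factorial_ne_zero
  field_simp
  ring

set_option maxHeartbeats 1000000 in
lemma hasDerivAt_G (α : ℝ) (n : ℕ) {z : ℂ} (hz : z ≠ 0) :
    HasDerivAt (fun z : ℂ => -(Complex.exp (Complex.I*α*z) - P (n+1) (Complex.I*α*z)) / ((n+1 : ℂ) * z^(n+1)))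
      ((Complex.exp (Complex.I*α*z) - P (n+1) (Complex.I*α*z)) / z^(n+2)
        - (Complex.I*α/(n+1)) * ((Complex.exp (Complex.I*α*z) - P n (Complex.I*α*z)) / z^(n+1))) z := by
  have hlin : HasDerivAt (fun z : ℂ => Complex.I*α*z) (Complex.I*α) z := by
    simpa using (hasDerivAt_id z).const_mul (Complex.I*(α:ℂ))
  have hexp : HasDerivAt (fun z : ℂ => Complex.exp (Complex.I*α*z))
      (Complex.exp (Complex.I*α*z) * (Complex.I*α)) z := hlin.cexp
  have hP : HasDerivAt (fun z : ℂ => P (n+1) (Complex.I*α*z)) (Complex.I*α * P n (Complex.I*α*z)) z :=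
    hasDerivAt_P_comp n (Complex.I*α) z
  have hD : HasDerivAt (fun z : ℂ => (n+1:ℂ) * z^(n+1)) ((n+1:ℂ) * ((n+1) * z^n)) z := by
    simpa using (hasDerivAt_pow (n+1) z).const_mul ((n+1:ℂ))
  have hD0 : (n+1:ℂ) * z^(n+1) ≠ 0 :=
    mul_ne_zero (Nat.cast_add_one_ne_zero n) (pow_ne_zero _ hz)
  have h := ((hexp.fun_sub hP).fun_neg).fun_div hD hD0
  refine h.congr_deriv ?_
  have hn0 : ((n:ℂ)+1) ≠ 0 := Nat.cast_add_one_ne_zero n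
  field_simp
  ring

noncomputable def Gc (α : ℝ) (n : ℕ) (x : ℝ) : ℂ :=
  -(Complex.exp (Complex.I*α*x) - P (n+1) (Complex.I*α*x)) / ((n+1 : ℂ) * (x:ℂ)^(n+1))

lemma contP (α : ℝ) (m : ℕ) : Continuous fun x : ℝ => P m (Complex.I*α*x) := by
  unfold P
  apply continuous_finset_sum
  intro k _
  exact ((continuous_const.mul Complex.continuous_ofReal).pow k).div_const _

lemma contOn (α : ℝ) (m k : ℕ) {s : Set ℝ} (hs : ∀ x ∈ s, x ≠ 0) :
    ContinuousOn (fun x : ℝ => (Complex.exp (Complex.I*α*x) - P m (Complex.I*α*x)) / (x:ℂ)^k) s := by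
  apply ContinuousOn.div
  · exact (((continuous_const.mul Complex.continuous_ofReal).cexp).sub (contP α m)).continuousOn
  · exact (Complex.continuous_ofReal.pow k).continuousOn
  · intro x hx
    exact pow_ne_zero _ (Complex.ofReal_ne_zero.2 (hs x hx))

lemma ibp (α : ℝ) (n : ℕ) {ε R : ℝ} (hε : 0 < ε) (hR : ε ≤ R) :
    (∫ x in ε..R, (Complex.exp (Complex.I*α*x) - P (n+1) (Complex.I*α*x)) / (x:ℂ)^(n+2))
      = Gc α n R - Gc α n ε
        + Complex.I*α/(n+1) * ∫ x in ε..R, (Complex.exp (Complex.I*α*x) - P n (Complex.I*α*x)) / (x:ℂ)^(n+1) := by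
  have hsub : ∀ x ∈ Set.uIcc ε R, x ≠ 0 := by
    intro x hx
    rw [Set.uIcc_of_le hR] at hx
    exact ne_of_gt (lt_of_lt_of_le hε hx.1)
  have h1 : IntervalIntegrable (fun x : ℝ =>
      (Complex.exp (Complex.I*α*x) - P (n+1) (Complex.I*α*x)) / (x:ℂ)^(n+2)) MeasureTheory.volume ε R :=
    (contOn α (n+1) (n+2) hsub).intervalIntegrable
  have h2 : IntervalIntegrable (fun x : ℝ =>
      (Complex.exp (Complex.I*α*x) - P n (Complex.I*α*x)) / (x:ℂ)^(n+1)) MeasureTheory.volume ε R :=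
    (contOn α n (n+1) hsub).intervalIntegrable
  have key := intervalIntegral.integral_eq_sub_of_hasDerivAt
    (f := fun x : ℝ => Gc α n x)
    (f' := fun x : ℝ => (Complex.exp (Complex.I*α*x) - P (n+1) (Complex.I*α*x)) / (x:ℂ)^(n+2)
      - Complex.I*α/(n+1) * ((Complex.exp (Complex.I*α*x) - P n (Complex.I*α*x)) / (x:ℂ)^(n+1)))
    (fun x hx => (hasDerivAt_G α n (Complex.ofReal_ne_zero.2 (hsub x hx))).comp_ofReal)
    (h1.sub (h2.const_mul _))
  rw [intervalIntegral.integral_sub h1 (h2.const_mul _),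
    intervalIntegral.integral_const_mul] at key
  rw [sub_eq_iff_eq_add] at key
  exact key

lemma tendsto_Gc_atTop (α : ℝ) (n : ℕ) : Tendsto (fun R : ℝ => Gc α n R) atTop (nhds 0) := by
  have heq : (fun R : ℝ =>
      (∑ k ∈ Finset.range (n+1), (Complex.I*α)^k/((k.factorial:ℂ)*((n:ℂ)+1)) * ((R^k/R^(n+1) : ℝ):ℂ))
        - Complex.exp (Complex.I*α*R) * (((((n:ℝ)+1)*R^(n+1))⁻¹ : ℝ):ℂ))
      =ᶠ[atTop] (fun R => Gc α n R) := by
    filter_upwards [eventually_gt_atTop (0:ℝ)] with R hR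
    have hR0 : ((R:ℂ)) ≠ 0 := ofReal_ne_zero.2 (ne_of_gt hR)
    have hn1 : ((n:ℂ)+1) ≠ 0 := Nat.cast_add_one_ne_zero n
    unfold Gc P
    rw [neg_div, sub_div, neg_sub, Finset.sum_div]
    symm
    congr 1
    · apply Finset.sum_congr rfl
      intro k hk
      have hf : ((k.factorial:ℂ)) ≠ 0 := Nat.cast_ne_zero.2 k.factorial_ne_zero
      push_cast
      rw [mul_pow, mul_pow]
      rw [div_div, div_mul_eq_mul_div, div_eq_div_iff
        (mul_ne_zero hf (mul_ne_zero hn1 (pow_ne_zero _ hR0)))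
        (mul_ne_zero hf hn1)]
      rw [mul_comm ((Complex.I)^k * (α:ℂ)^k) ((R:ℂ)^k/(R:ℂ)^(n+1)), div_mul_eq_mul_div,
        div_mul_eq_mul_div, eq_div_iff (pow_ne_zero _ hR0)]
      ring
    · push_cast
      field_simp
  apply Tendsto.congr' heq
  have T1 : Tendsto (fun R : ℝ =>
      ∑ k ∈ Finset.range (n+1), (Complex.I*α)^k/((k.factorial:ℂ)*((n:ℂ)+1)) * ((R^k/R^(n+1) : ℝ):ℂ))
      atTop (nhds 0) := by
    have : Tendsto (fun R : ℝ =>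
        ∑ k ∈ Finset.range (n+1), (Complex.I*α)^k/((k.factorial:ℂ)*((n:ℂ)+1)) * ((R^k/R^(n+1) : ℝ):ℂ))
        atTop (nhds (∑ k ∈ Finset.range (n+1), (Complex.I*α)^k/((k.factorial:ℂ)*((n:ℂ)+1)) * ((0:ℝ):ℂ))) := by
      apply tendsto_finset_sum
      intro k hk
      apply Tendsto.const_mul
      exact (Complex.continuous_ofReal.tendsto 0).comp
        (tendsto_pow_div_pow_atTop_zero (by simp at hk; omega))
    simpa using this
  have T2 : Tendsto (fun R : ℝ =>
      Complex.exp (Complex.I*α*R) * (((((n:ℝ)+1)*R^(n+1))⁻¹ : ℝ):ℂ)) atTop (nhds 0) := by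
    have hdenom : Tendsto (fun R : ℝ => (((n:ℝ)+1)*R^(n+1))⁻¹) atTop (nhds 0) := by
      apply Filter.Tendsto.inv_tendsto_atTop
      exact (tendsto_pow_atTop (Nat.succ_ne_zero n)).const_mul_atTop (by positivity)
    apply squeeze_zero_norm (a := fun R : ℝ => |(((n:ℝ)+1)*R^(n+1))⁻¹|)
    · intro R
      rw [norm_mul]
      have h1 : ‖Complex.exp (Complex.I*α*R)‖ = 1 := by
        rw [Complex.norm_exp]
        simp [Complex.mul_re]
      rw [h1, one_mul, Complex.norm_real]
      exact le_refl _
    · simpa using hdenom.abs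
  simpa using T1.sub T2

lemma tendsto_Gc_zero (α : ℝ) (hα : α ≠ 0) (n : ℕ) :
    Tendsto (fun ε : ℝ => Gc α n ε + (Complex.I*α)^(n+1)/(((n:ℂ)+1)*(((n+1).factorial:ℕ):ℂ)))
      (nhdsWithin 0 (Set.Ioi 0)) (nhds 0) := by
  have hαpos : 0 < |α| := abs_pos.2 hα
  set C : ℝ := ((n+3 : ℝ) * (((n+2).factorial : ℝ)*(n+2))⁻¹) with hC
  set K : ℝ := |α|^(n+2) * C / (n+1) with hKdef
  apply squeeze_zero_norm' (a := fun ε : ℝ => K * ε)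
  · filter_upwards [Ioo_mem_nhdsGT_of_mem
      (show (0:ℝ) ∈ Set.Ico 0 |α|⁻¹ from ⟨le_refl _, by positivity⟩)] with ε hε
    obtain ⟨hε0, hε1⟩ := hε
    have hεc : ((ε:ℂ)) ≠ 0 := ofReal_ne_zero.2 (ne_of_gt hε0)
    have hn1 : ((n:ℂ)+1) ≠ 0 := Nat.cast_add_one_ne_zero n
    have hfac : (((n+1).factorial:ℕ):ℂ) ≠ 0 := Nat.cast_ne_zero.2 (n+1).factorial_ne_zero
    have heq : Gc α n ε + (Complex.I*α)^(n+1)/(((n:ℂ)+1)*(((n+1).factorial:ℕ):ℂ))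
        = -(Complex.exp (Complex.I*α*ε) - P (n+2) (Complex.I*α*ε))/(((n:ℂ)+1)*(ε:ℂ)^(n+1)) := by
      have h1 : P (n+2) (Complex.I*α*ε)
          = P (n+1) (Complex.I*α*ε) + (Complex.I*α*ε)^(n+1)/(((n+1).factorial:ℕ):ℂ) := by
        unfold P; rw [Finset.sum_range_succ]
      rw [h1]
      unfold Gc
      rw [mul_pow, mul_pow]
      field_simp
      ring
    rw [heq]
    have habs : ‖Complex.I*α*ε‖ = |α| * ε := by
      rw [norm_mul, norm_mul]
      simp [abs_of_pos hε0]
    have hz1 : ‖Complex.I*α*ε‖ ≤ 1 := by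
      rw [habs]
      calc |α| * ε ≤ |α| * |α|⁻¹ := by
            apply mul_le_mul_of_nonneg_left (le_of_lt hε1) (le_of_lt hαpos)
        _ = 1 := mul_inv_cancel₀ (ne_of_gt hαpos)
    have hb := Complex.exp_bound hz1 (n := n+2) (by omega)
    have hPdef : P (n+2) (Complex.I*α*ε)
        = ∑ m ∈ Finset.range (n+2), (Complex.I*α*ε)^m / (m.factorial : ℂ) := rfl
    rw [norm_div, norm_neg]
    have hden : ‖((n:ℂ)+1)*(ε:ℂ)^(n+1)‖ = ((n:ℝ)+1)*ε^(n+1) := by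
      rw [norm_mul, norm_pow, Complex.norm_real, Real.norm_eq_abs, abs_of_pos hε0]
      congr 1
      rw [show ((n:ℂ)+1) = (((n+1:ℕ)):ℂ) by push_cast; ring, Complex.norm_natCast]
      push_cast; ring
    rw [hden, hPdef]
    rw [div_le_iff₀ (by positivity)]
    calc ‖Complex.exp (Complex.I*↑α*↑ε)
          - ∑ m ∈ Finset.range (n+2), (Complex.I*α*ε)^m / (m.factorial : ℂ)‖
        ≤ ‖Complex.I*α*ε‖ ^ (n+2) * ((n+3 : ℝ) * (((n+2).factorial : ℝ)*(n+2))⁻¹) := by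
          convert hb using 3 <;> push_cast <;> ring
      _ = (|α| * ε)^(n+2) * C := by rw [habs, hC]
      _ = K * ε * (((n:ℝ)+1)*ε^(n+1)) := by
          rw [hKdef]
          field_simp
          ring
  · have : Tendsto (fun ε : ℝ => K * ε) (nhds 0) (nhds 0) := by
      exact (continuous_const.mul continuous_id).tendsto' (0:ℝ) 0 (by simp)
    exact this.mono_left nhdsWithin_le_nhds

lemma c_rec (α : ℝ) (n : ℕ) :
    c (n+2) * (α:ℂ)^(n+1)
      = Complex.I*α/((n:ℂ)+1) * (c (n+1) * (α:ℂ)^n)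
        + (Complex.I*α)^(n+1)/(((n:ℂ)+1)*(((n+1).factorial:ℕ):ℂ)) := by
  unfold c
  simp only [show n+2-1 = n+1 from rfl, show n+1-1 = n from rfl]
  rw [Finset.sum_range_succ]
  have hn1 : ((n:ℂ)+1) ≠ 0 := Nat.cast_add_one_ne_zero n
  have hf : ((n.factorial:ℕ):ℂ) ≠ 0 := Nat.cast_ne_zero.2 n.factorial_ne_zero
  rw [Nat.factorial_succ]
  push_cast
  field_simp
  ring

lemma hcoef (α : ℝ) (n : ℕ) :
    Complex.I*α/((n:ℂ)+1) * ((Complex.I*α)^n / ((n.factorial:ℕ):ℂ))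
      = (Complex.I*α)^(n+1) / (((n+1).factorial:ℕ):ℂ) := by
  have hn1 : ((n:ℂ)+1) ≠ 0 := Nat.cast_add_one_ne_zero n
  have hf : ((n.factorial:ℕ):ℂ) ≠ 0 := Nat.cast_ne_zero.2 n.factorial_ne_zero
  rw [Nat.factorial_succ]
  push_cast
  field_simp
  ring

lemma S_lemma (α : ℝ) (hα : α ≠ 0) (E : ℝ → ℂ)
    (hE : ∀ ε : ℝ, 0 < ε →
      Tendsto (fun R : ℝ => ∫ x in ε..R, Complex.exp (Complex.I * α * x) / (x : ℂ))
        atTop (nhds (E ε)))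
    (n : ℕ) :
    ∃ Jf ω : ℝ → ℂ,
      (∀ ε : ℝ, 0 < ε → Tendsto (fun R : ℝ => ∫ x in ε..R,
          (Complex.exp (Complex.I*α*x) - P n (Complex.I*α*x)) / (x:ℂ)^(n+1))
        atTop (nhds (Jf ε))) ∧
      Tendsto ω (nhdsWithin 0 (Set.Ioi 0)) (nhds 0) ∧
      ∀ ε : ℝ, 0 < ε →
        Jf ε = c (n+1) * (α:ℂ)^n + (Complex.I*α)^n / ((n.factorial:ℕ):ℂ) * E ε + ω ε := by
  induction n with
  | zero =>
    refine ⟨E, fun _ => 0, ?_, ?_, ?_⟩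
    · intro ε hε
      apply (hE ε hε).congr
      intro R
      apply intervalIntegral.integral_congr
      intro x hx
      simp [P]
    · simpa using tendsto_const_nhds
    · intro ε hε
      simp [c, P]
  | succ n ih =>
    obtain ⟨Jf, ω, hJf, hω, hfor⟩ := ih
    refine ⟨fun ε => Complex.I*α/((n:ℂ)+1) * Jf ε + (0 - Gc α n ε),
      fun ε => -(Gc α n ε + (Complex.I*α)^(n+1)/(((n:ℂ)+1)*(((n+1).factorial:ℕ):ℂ)))
        + Complex.I*α/((n:ℂ)+1) * ω ε, ?_, ?_, ?_⟩
    · intro ε hε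
      have hcong : (fun R : ℝ => Gc α n R - Gc α n ε
            + Complex.I*α/((n:ℂ)+1) * ∫ x in ε..R,
              (Complex.exp (Complex.I*α*x) - P n (Complex.I*α*x)) / (x:ℂ)^(n+1))
          =ᶠ[atTop] (fun R : ℝ => ∫ x in ε..R,
            (Complex.exp (Complex.I*α*x) - P (n+1) (Complex.I*α*x)) / (x:ℂ)^(n+2)) := by
        filter_upwards [eventually_ge_atTop ε] with R hR
        exact (ibp α n hε hR).symm
      have hlim : Tendsto (fun R : ℝ => Gc α n R - Gc α n ε
            + Complex.I*α/((n:ℂ)+1) * ∫ x in ε..R,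
              (Complex.exp (Complex.I*α*x) - P n (Complex.I*α*x)) / (x:ℂ)^(n+1))
          atTop (nhds ((0 - Gc α n ε) + Complex.I*α/((n:ℂ)+1) * Jf ε)) :=
        (((tendsto_Gc_atTop α n).sub_const _).add ((hJf ε hε).const_mul _))
      have := hlim.congr' hcong
      convert this using 2
      ring
    · have h1 := (tendsto_Gc_zero α hα n).neg
      have h2 := hω.const_mul (Complex.I*α/((n:ℂ)+1))
      simpa using h1.add h2
    · intro ε hε
      have hf := hfor ε hε
      have h1 := c_rec α n
      have h2 := hcoef α n
      simp only []
      linear_combination (Complex.I*(α:ℂ)/((n:ℂ)+1)) * hf - h1 + (E ε) * h2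

/-- Key lemma: if `E ε = ∫_ε^∞ e^{iαx}/x dx` and
`J ε = ∫_ε^∞ (e^{iαx} − P_{q-2}(iαx))/x^q dx` (both as improper integrals, i.e. limits of
`∫_ε^R` as `R → ∞`), then `J ε = c_q α^{q-1} + (iα)^{q-1}/(q-1)! ⬝ E ε + ω ε` with
`ω ε → 0` as `ε → 0⁺`.  In particular for `q = 1` one has `c_1 = 0` and `ω = 0` may be taken,
i.e. `J ε = E ε`. -/
theorem key_lemma (q : ℕ) (hq : 1 ≤ q) (α : ℝ) (hα : α ≠ 0) (E J : ℝ → ℂ)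
    (hE : ∀ ε : ℝ, 0 < ε →
      Tendsto (fun R : ℝ => ∫ x in ε..R, Complex.exp (Complex.I * α * x) / (x : ℂ))
        atTop (nhds (E ε)))
    (hJ : ∀ ε : ℝ, 0 < ε →
      Tendsto (fun R : ℝ => ∫ x in ε..R,
          (Complex.exp (Complex.I * α * x) - P (q - 1) (Complex.I * α * x)) / (x : ℂ) ^ q)
        atTop (nhds (J ε))) :
    ∃ ω : ℝ → ℂ, Tendsto ω (nhdsWithin 0 (Set.Ioi 0)) (nhds 0) ∧
      ∀ ε : ℝ, 0 < ε →
        J ε = c q * (α : ℂ) ^ (q - 1)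
            + (Complex.I * α) ^ (q - 1) / ((q - 1).factorial : ℂ) * E ε + ω ε := by
  obtain ⟨n, rfl⟩ : ∃ n, q = n + 1 := ⟨q - 1, (Nat.succ_pred_eq_of_pos hq).symm⟩
  obtain ⟨Jf, ω, hJf, hω, hfor⟩ := S_lemma α hα E hE n
  refine ⟨ω, hω, ?_⟩
  intro ε hε
  have hJ' := hJ ε hε
  simp only [Nat.add_sub_cancel] at hJ' ⊢
  have hJeq : J ε = Jf ε := tendsto_nhds_unique hJ' (hJf ε hε)
  rw [hJeq, hfor ε hε]
end

section
/- ∫_0^∞ sin(x)^4 / x^3 dx = log 2. -/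
open Real MeasureTheory Set Filter intervalIntegral
open scoped Topology

noncomputable def Hfn (x : ℝ) : ℝ :=
  -(Real.sin x ^ 4) / (2 * x ^ 2) - (Real.sin (2*x) - Real.sin (4*x) / 2) / (2 * x)

lemma sin_key (x : ℝ) :
    Real.sin (2*x) - Real.sin (4*x) / 2 = 4 * Real.sin x ^ 3 * Real.cos x := by
  have e4 : Real.sin (4*x) = 2 * Real.sin (2*x) * Real.cos (2*x) := by
    rw [show (4:ℝ)*x = 2*(2*x) by ring, Real.sin_two_mul]
  rw [e4, Real.sin_two_mul, Real.cos_two_mul]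
  linear_combination (-4*Real.sin x*Real.cos x) * Real.sin_sq_add_cos_sq x

lemma hasDerivAt_Hfn {x : ℝ} (hx : x ≠ 0) :
    HasDerivAt Hfn
      (Real.sin x ^ 4 / x ^ 3 - (Real.cos (2*x) - Real.cos (4*x)) / x) x := by
  have h2 : HasDerivAt (fun y : ℝ => 2*y) 2 x := by
    simpa using (hasDerivAt_id x).const_mul 2
  have h4 : HasDerivAt (fun y : ℝ => 4*y) 4 x := by
    simpa using (hasDerivAt_id x).const_mul 4
  have hs2 : HasDerivAt (fun y : ℝ => Real.sin (2*y)) (Real.cos (2*x) * 2) x :=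
    (Real.hasDerivAt_sin (2*x)).comp x h2
  have hs4 : HasDerivAt (fun y : ℝ => Real.sin (4*y)) (Real.cos (4*x) * 4) x :=
    (Real.hasDerivAt_sin (4*x)).comp x h4
  have hnum : HasDerivAt (fun y : ℝ => -(Real.sin y ^ 4))
      (-(4 * Real.sin x ^ 3 * Real.cos x)) x := by
    simpa [mul_comm, mul_assoc, mul_left_comm] using ((Real.hasDerivAt_sin x).fun_pow 4).fun_neg
  have hden1 : HasDerivAt (fun y : ℝ => 2 * y ^ 2) (2 * (2 * x)) x := by
    simpa using (hasDerivAt_pow 2 x).const_mul 2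
  have hA : HasDerivAt (fun y : ℝ => -(Real.sin y ^ 4) / (2 * y ^ 2))
      (Real.sin x ^ 4 / x ^ 3 - 2 * Real.sin x ^ 3 * Real.cos x / x ^ 2) x := by
    refine (hnum.div hden1 (by positivity)).congr_deriv ?_
    field_simp
    ring
  have hnum2 : HasDerivAt (fun y : ℝ => Real.sin (2*y) - Real.sin (4*y) / 2)
      (Real.cos (2*x) * 2 - Real.cos (4*x) * 4 / 2) x :=
    hs2.sub (hs4.div_const 2)
  have hB : HasDerivAt (fun y : ℝ => (Real.sin (2*y) - Real.sin (4*y) / 2) / (2 * y))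
      ((Real.cos (2*x) - Real.cos (4*x)) / x
        - (Real.sin (2*x) - Real.sin (4*x) / 2) / (2 * x ^ 2)) x := by
    refine (hnum2.div h2 (by simpa using hx)).congr_deriv ?_
    field_simp
    ring
  have h := hA.sub hB
  rw [sin_key x] at h
  refine h.congr_deriv ?_
  field_simp
  ring

lemma intInt_cos_div {p q : ℝ} (hp : 0 < p) (hq : 0 < q) :
    IntervalIntegrable (fun u => Real.cos u / u) volume p q := by
  apply ContinuousOn.intervalIntegrable
  apply ContinuousOn.div Real.continuous_cos.continuousOn continuousOn_id
  intro x hx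
  have : min p q ≤ x := hx.1
  have : 0 < x := lt_of_lt_of_le (lt_min hp hq) this
  exact ne_of_gt this

lemma cos_sub {c : ℝ} (hc : c ≠ 0) (ε b : ℝ) :
    ∫ x in ε..b, Real.cos (c*x) / x = ∫ u in c*ε..c*b, Real.cos u / u := by
  have h1 : ∀ x : ℝ, Real.cos (c*x) / x = c * (Real.cos (c*x) / (c*x)) := by
    intro x
    rw [mul_div_assoc', mul_div_mul_left _ _ hc]
  simp_rw [h1]
  rw [intervalIntegral.integral_const_mul]
  exact intervalIntegral.mul_integral_comp_mul_left (f := fun u => Real.cos u / u) c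

lemma key_formula {ε b : ℝ} (hε : 0 < ε) (hb : ε ≤ b) :
    ∫ x in ε..b, Real.sin x ^ 4 / x ^ 3
      = (Hfn b - Hfn ε)
        + ((∫ u in 2*ε..4*ε, Real.cos u / u) - ∫ u in 2*b..4*b, Real.cos u / u) := by
  have hεb : uIcc ε b = Icc ε b := uIcc_of_le hb
  have hpos : ∀ x ∈ uIcc ε b, x ≠ 0 := by
    intro x hx
    rw [hεb] at hx
    exact ne_of_gt (lt_of_lt_of_le hε hx.1)
  have hc1 : ContinuousOn (fun x => Real.sin x ^ 4 / x ^ 3) (uIcc ε b) := by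
    apply ContinuousOn.div (by fun_prop) (by fun_prop)
    exact fun x hx => pow_ne_zero _ (hpos x hx)
  have hc2 : ContinuousOn (fun x => (Real.cos (2*x) - Real.cos (4*x)) / x) (uIcc ε b) := by
    apply ContinuousOn.div (by fun_prop) continuousOn_id hpos
  have hc2a : ContinuousOn (fun x => Real.cos (2*x) / x) (uIcc ε b) := by
    apply ContinuousOn.div (by fun_prop) continuousOn_id hpos
  have hc2b : ContinuousOn (fun x => Real.cos (4*x) / x) (uIcc ε b) := by
    apply ContinuousOn.div (by fun_prop) continuousOn_id hpos
  have hftc : ∫ x in ε..b,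
      (Real.sin x ^ 4 / x ^ 3 - (Real.cos (2*x) - Real.cos (4*x)) / x)
        = Hfn b - Hfn ε := by
    apply intervalIntegral.integral_eq_sub_of_hasDerivAt
    · exact fun x hx => hasDerivAt_Hfn (hpos x hx)
    · exact (hc1.sub hc2).intervalIntegrable
  rw [intervalIntegral.integral_sub hc1.intervalIntegrable hc2.intervalIntegrable] at hftc
  have hsplit : ∫ x in ε..b, (Real.cos (2*x) - Real.cos (4*x)) / x
      = (∫ u in 2*ε..2*b, Real.cos u / u) - ∫ u in 4*ε..4*b, Real.cos u / u := by
    have : ∀ x : ℝ, (Real.cos (2*x) - Real.cos (4*x)) / x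
        = Real.cos (2*x) / x - Real.cos (4*x) / x := fun x => sub_div _ _ _
    simp_rw [this]
    rw [intervalIntegral.integral_sub hc2a.intervalIntegrable hc2b.intervalIntegrable,
      cos_sub (by norm_num) ε b, cos_sub (by norm_num) ε b]
  have hbpos : 0 < b := lt_of_lt_of_le hε hb
  have A1 : (∫ u in 2*ε..4*ε, Real.cos u / u) + ∫ u in 4*ε..4*b, Real.cos u / u
      = ∫ u in 2*ε..4*b, Real.cos u / u :=
    intervalIntegral.integral_add_adjacent_intervals
      (intInt_cos_div (by linarith) (by linarith)) (intInt_cos_div (by linarith) (by linarith))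
  have A2 : (∫ u in 2*ε..2*b, Real.cos u / u) + ∫ u in 2*b..4*b, Real.cos u / u
      = ∫ u in 2*ε..4*b, Real.cos u / u :=
    intervalIntegral.integral_add_adjacent_intervals
      (intInt_cos_div (by linarith) (by linarith)) (intInt_cos_div (by linarith) (by linarith))
  linarith [hftc, hsplit]

lemma Hfn_eq {b : ℝ} (hb : b ≠ 0) :
    Hfn b = (-(Real.sin b ^ 4) - b * (Real.sin (2*b) - Real.sin (4*b)/2)) / (2*b^2) := by
  unfold Hfn
  field_simp

lemma Hfn_tendsto_atTop : Tendsto Hfn atTop (𝓝 0) := by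
  apply squeeze_zero_norm' (a := fun b : ℝ => 2 * b⁻¹)
  · filter_upwards [eventually_ge_atTop (1:ℝ)] with b hb
    have hb0 : 0 < b := by linarith
    have h4 : 2 * b⁻¹ * (2*b^2) = 4*b := by field_simp; ring
    have hs4 : Real.sin b ^ 4 = (Real.sin b ^ 2) ^ 2 := by ring
    have hsq : Real.sin b ^ 2 ≤ 1 := Real.sin_sq_le_one b
    have hsq0 : 0 ≤ Real.sin b ^ 2 := sq_nonneg _
    rw [Real.norm_eq_abs, Hfn_eq hb0.ne', abs_div, abs_of_pos (by positivity : (0:ℝ) < 2*b^2),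
      div_le_iff₀ (by positivity : (0:ℝ) < 2*b^2), h4]
    rw [abs_le]
    constructor
    · nlinarith [Real.neg_one_le_sin (2*b), Real.sin_le_one (2*b),
        Real.neg_one_le_sin (4*b), Real.sin_le_one (4*b), sq_nonneg (Real.sin b ^ 2)]
    · nlinarith [Real.neg_one_le_sin (2*b), Real.sin_le_one (2*b),
        Real.neg_one_le_sin (4*b), Real.sin_le_one (4*b), sq_nonneg (Real.sin b ^ 2)]
  · simpa using tendsto_inv_atTop_zero.const_mul (2:ℝ)

lemma Hfn_small_bound {ε : ℝ} (h1 : 0 < ε) (h2 : ε ≤ 1/4) : |Hfn ε| ≤ 5 * ε^2 := by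
  have h2e : 0 < 2*ε := by linarith
  have h4e : 0 < 4*ε := by linarith
  have s2u : Real.sin (2*ε) < 2*ε := Real.sin_lt h2e
  have s4u : Real.sin (4*ε) < 4*ε := Real.sin_lt h4e
  have s2l : 2*ε - (2*ε)^3/4 < Real.sin (2*ε) := by have := Real.sin_gt_sub_cube h2e; have := pow_pos h2e 3; linarith
  have s4l : 4*ε - (4*ε)^3/4 < Real.sin (4*ε) := by have := Real.sin_gt_sub_cube h4e; have := pow_pos h4e 3; linarith
  have ssq : Real.sin ε ^ 2 ≤ ε ^ 2 := Real.sin_sq_le_sq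
  rw [Hfn_eq h1.ne', abs_div, abs_of_pos (by positivity : (0:ℝ) < 2*ε^2),
    div_le_iff₀ (by positivity : (0:ℝ) < 2*ε^2), abs_le]
  constructor
  · nlinarith [sq_nonneg (Real.sin ε ^ 2), sq_nonneg (Real.sin ε), sq_nonneg ε]
  · nlinarith [sq_nonneg (Real.sin ε ^ 2), sq_nonneg (Real.sin ε), sq_nonneg ε]

lemma Hfn_inv_tendsto : Tendsto (fun b : ℝ => Hfn b⁻¹) atTop (𝓝 0) := by
  apply squeeze_zero_norm' (a := fun b : ℝ => 5 * (b⁻¹)^2)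
  · filter_upwards [eventually_ge_atTop (4:ℝ)] with b hb
    have hb0 : 0 < b := by linarith
    have hε : 0 < b⁻¹ := inv_pos.2 hb0
    have hε4 : b⁻¹ ≤ 1/4 := by
      rw [show (1:ℝ)/4 = 4⁻¹ by norm_num]
      exact inv_anti₀ (by norm_num) hb
    exact Hfn_small_bound hε hε4
  · simpa using (tendsto_inv_atTop_zero (𝕜 := ℝ)).pow 2 |>.const_mul 5

lemma intInt_one_div {p q : ℝ} (hp : 0 < p) (hq : 0 < q) :
    IntervalIntegrable (fun u : ℝ => 1 / u) volume p q := by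
  apply ContinuousOn.intervalIntegrable
  apply ContinuousOn.div continuousOn_const continuousOn_id
  intro x hx
  exact ne_of_gt (lt_of_lt_of_le (lt_min hp hq) hx.1)

lemma C_bound {ε : ℝ} (hε : 0 < ε) :
    |(∫ u in 2*ε..4*ε, Real.cos u / u) - Real.log 2| ≤ 4 * ε^2 := by
  have hlog : ∫ u in 2*ε..4*ε, 1/u = Real.log 2 := by
    rw [integral_one_div]
    · congr 1
      field_simp
      ring
    · intro h
      rcases h with ⟨h1, h2⟩
      rw [min_le_iff] at h1
      rcases h1 with h | h <;> linarith
  have key : (∫ u in 2*ε..4*ε, Real.cos u / u) - Real.log 2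
      = ∫ u in 2*ε..4*ε, (Real.cos u - 1)/u := by
    rw [← hlog, ← intervalIntegral.integral_sub (intInt_cos_div (by linarith) (by linarith))
      (intInt_one_div (by linarith) (by linarith))]
    apply intervalIntegral.integral_congr
    intro u _
    simp [sub_div]
  rw [key]
  have hb := intervalIntegral.norm_integral_le_of_norm_le_const
    (C := 2*ε) (f := fun u => (Real.cos u - 1)/u) (a := 2*ε) (b := 4*ε) ?_
  · rw [Real.norm_eq_abs] at hb
    refine hb.trans ?_
    rw [show (4*ε - 2*ε) = 2*ε by ring, abs_of_pos (by linarith)]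
    nlinarith
  · intro u hu
    rw [Set.uIoc_of_le (by linarith : 2*ε ≤ 4*ε)] at hu
    have hu0 : 0 < u := lt_trans (by linarith) hu.1
    rw [Real.norm_eq_abs, abs_div, abs_of_pos hu0,
      abs_of_nonpos (by linarith [Real.cos_le_one u] : Real.cos u - 1 ≤ 0)]
    rw [div_le_iff₀ hu0]
    have := Real.one_sub_sq_div_two_le_cos (x := u)
    nlinarith [hu.1, hu.2]

lemma C_tendsto : Tendsto (fun b : ℝ => ∫ u in 2*b⁻¹..4*b⁻¹, Real.cos u / u)
    atTop (𝓝 (Real.log 2)) := by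
  have h0 : Tendsto (fun b : ℝ => (∫ u in 2*b⁻¹..4*b⁻¹, Real.cos u / u) - Real.log 2)
      atTop (𝓝 0) := by
    apply squeeze_zero_norm' (a := fun b : ℝ => 4 * (b⁻¹)^2)
    · filter_upwards [eventually_gt_atTop (0:ℝ)] with b hb
      exact C_bound (inv_pos.2 hb)
    · simpa using (tendsto_inv_atTop_zero (𝕜 := ℝ)).pow 2 |>.const_mul 4
  have := h0.add_const (Real.log 2)
  simpa using this

lemma D_bound {b : ℝ} (hb : 1 ≤ b) :
    |∫ u in 2*b..4*b, Real.cos u / u| ≤ 2 * b⁻¹ := by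
  have hb0 : 0 < b := by linarith
  have h2b : 0 < 2*b := by linarith
  have h4b : 0 < 4*b := by linarith
  have huIcc : uIcc (2*b) (4*b) = Icc (2*b) (4*b) := uIcc_of_le (by linarith)
  have hderiv : ∀ u ∈ uIcc (2*b) (4*b),
      HasDerivAt (fun u => Real.sin u / u) (Real.cos u / u - Real.sin u / u^2) u := by
    intro u hu
    rw [huIcc] at hu
    have hu0 : 0 < u := lt_of_lt_of_le h2b hu.1
    have := (Real.hasDerivAt_sin u).div (hasDerivAt_id u) hu0.ne'
    refine this.congr_deriv ?_
    simp only [id_eq]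
    field_simp
  have hpos : ∀ x ∈ uIcc (2*b) (4*b), x ≠ 0 := by
    intro x hx
    rw [huIcc] at hx
    exact (lt_of_lt_of_le h2b hx.1).ne'
  have hcont : ContinuousOn (fun u => Real.cos u / u - Real.sin u / u^2)
      (uIcc (2*b) (4*b)) := by
    apply ContinuousOn.sub
    · exact ContinuousOn.div Real.continuous_cos.continuousOn continuousOn_id hpos
    · exact ContinuousOn.div Real.continuous_sin.continuousOn (by fun_prop)
        (fun x hx => pow_ne_zero _ (hpos x hx))
  have hsin2 : ContinuousOn (fun u => Real.sin u / u^2) (uIcc (2*b) (4*b)) :=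
    ContinuousOn.div Real.continuous_sin.continuousOn (by fun_prop)
      (fun x hx => pow_ne_zero _ (hpos x hx))
  have hFTC : ∫ u in 2*b..4*b, (Real.cos u / u - Real.sin u / u^2)
      = Real.sin (4*b) / (4*b) - Real.sin (2*b) / (2*b) :=
    intervalIntegral.integral_eq_sub_of_hasDerivAt hderiv hcont.intervalIntegrable
  rw [intervalIntegral.integral_sub (intInt_cos_div h2b h4b) hsin2.intervalIntegrable] at hFTC
  have hD : ∫ u in 2*b..4*b, Real.cos u / u
      = (Real.sin (4*b) / (4*b) - Real.sin (2*b) / (2*b))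
        + ∫ u in 2*b..4*b, Real.sin u / u^2 := by linarith
  have hR : |∫ u in 2*b..4*b, Real.sin u / u^2| ≤ 1/(2*b) := by
    have hb2 := intervalIntegral.norm_integral_le_of_norm_le_const
      (C := 1/(4*b^2)) (f := fun u => Real.sin u / u^2) (a := 2*b) (b := 4*b) ?_
    · rw [Real.norm_eq_abs] at hb2
      refine hb2.trans ?_
      rw [show (4*b - 2*b) = 2*b by ring, abs_of_pos h2b]
      rw [div_mul_eq_mul_div, div_le_div_iff₀ (by positivity) h2b]
      nlinarith
    · intro u hu
      rw [Set.uIoc_of_le (by linarith : 2*b ≤ 4*b)] at hu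
      have hu0 : 0 < u := lt_trans h2b hu.1
      rw [Real.norm_eq_abs, abs_div, abs_of_pos (by positivity : (0:ℝ) < u^2)]
      rw [div_le_div_iff₀ (by positivity) (by positivity)]
      nlinarith [Real.abs_sin_le_one u, abs_nonneg (Real.sin u), hu.1]
  have h1 : |Real.sin (4*b) / (4*b)| ≤ 1/(4*b) := by
    rw [abs_div, abs_of_pos h4b]
    gcongr
    exact Real.abs_sin_le_one _
  have h2 : |Real.sin (2*b) / (2*b)| ≤ 1/(2*b) := by
    rw [abs_div, abs_of_pos h2b]
    gcongr
    exact Real.abs_sin_le_one _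
  rw [hD]
  have tri : |(Real.sin (4*b) / (4*b) - Real.sin (2*b) / (2*b))
        + ∫ u in 2*b..4*b, Real.sin u / u^2|
      ≤ |Real.sin (4*b) / (4*b)| + |Real.sin (2*b) / (2*b)|
        + |∫ u in 2*b..4*b, Real.sin u / u^2| := by
    calc _ ≤ |Real.sin (4*b) / (4*b) - Real.sin (2*b) / (2*b)|
        + |∫ u in 2*b..4*b, Real.sin u / u^2| := abs_add_le _ _
    _ ≤ _ := by linarith [abs_sub (Real.sin (4*b) / (4*b)) (Real.sin (2*b) / (2*b))]
  refine tri.trans ?_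
  have e1 : 1/(4*b) = b⁻¹/4 := by field_simp
  have e2 : 1/(2*b) = b⁻¹/2 := by field_simp
  have : (0:ℝ) ≤ b⁻¹ := by positivity
  linarith [h1, h2, hR]

lemma D_tendsto : Tendsto (fun b : ℝ => ∫ u in 2*b..4*b, Real.cos u / u) atTop (𝓝 0) := by
  apply squeeze_zero_norm' (a := fun b : ℝ => 2 * b⁻¹)
  · filter_upwards [eventually_ge_atTop (1:ℝ)] with b hb
    exact D_bound hb
  · simpa using tendsto_inv_atTop_zero.const_mul (2:ℝ)

lemma integrable_g : IntegrableOn (fun x : ℝ => Real.sin x ^ 4 / x ^ 3) (Ioi 0) := by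
  have hmeas : Measurable fun x : ℝ => Real.sin x ^ 4 / x ^ 3 :=
    (Real.measurable_sin.pow_const 4).div (measurable_id.pow_const 3)
  rw [← Set.Ioc_union_Ioi_eq_Ioi (zero_le_one (α := ℝ))]
  apply IntegrableOn.union
  · apply Measure.integrableOn_of_bounded (M := 1)
    · rw [Real.volume_Ioc]
      exact ENNReal.ofReal_ne_top
    · exact hmeas.aestronglyMeasurable
    · filter_upwards [ae_restrict_mem measurableSet_Ioc] with x hx
      have hx0 : 0 < x := hx.1
      have hsq : Real.sin x ^ 2 ≤ x ^ 2 := Real.sin_sq_le_sq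
      rw [Real.norm_eq_abs, abs_div, abs_of_pos (by positivity : (0:ℝ) < x^3)]
      rw [div_le_one (by positivity)]
      calc |Real.sin x ^ 4| = (Real.sin x ^ 2)^2 := by
            rw [abs_of_nonneg (by positivity)]; ring
        _ ≤ (x^2)^2 := by gcongr
        _ = x^3 * x := by ring
        _ ≤ x^3 * 1 := by gcongr; exact hx.2
        _ = x^3 := by ring
  · have hi : IntegrableOn (fun x : ℝ => x ^ (-3:ℝ)) (Ioi 1) :=
      integrableOn_Ioi_rpow_of_lt (by norm_num) one_pos
    apply Integrable.mono hi hmeas.aestronglyMeasurable.restrict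
    filter_upwards [ae_restrict_mem measurableSet_Ioi] with x hx
    have hx1 : (1:ℝ) < x := hx
    have hx0 : (0:ℝ) < x := lt_trans one_pos hx1
    have hrp : x ^ (-3:ℝ) = (x^3)⁻¹ := by
      rw [Real.rpow_neg hx0.le, show (3:ℝ) = ((3:ℕ):ℝ) by norm_num, Real.rpow_natCast]
    rw [Real.norm_eq_abs, Real.norm_eq_abs, hrp, abs_div,
      abs_of_pos (by positivity : (0:ℝ) < x^3), abs_of_pos (by positivity : (0:ℝ) < (x^3)⁻¹)]
    rw [inv_eq_one_div, div_le_div_iff₀ (by positivity) (by positivity)]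
    have hsq : Real.sin x ^ 2 ≤ 1 := Real.sin_sq_le_one x
    have h4 : |Real.sin x ^ 4| ≤ 1 := by
      rw [abs_of_nonneg (by positivity : (0:ℝ) ≤ Real.sin x ^ 4),
        show Real.sin x ^ 4 = (Real.sin x ^ 2)^2 by ring]
      nlinarith [sq_nonneg (Real.sin x ^ 2), sq_nonneg (Real.sin x)]
    nlinarith [pow_pos hx0 3]

theorem integral_sin_fourth_div_cube :
    ∫ x in Set.Ioi (0:ℝ), Real.sin x ^ 4 / x ^ 3 = Real.log 2 := by
  have hcover : AECover (volume.restrict (Ioi (0:ℝ))) atTop (fun b : ℝ => Ioc b⁻¹ b) := by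
    constructor
    · filter_upwards [ae_restrict_mem measurableSet_Ioi] with x hx
      have h1 : ∀ᶠ b : ℝ in atTop, b⁻¹ < x :=
        (tendsto_inv_atTop_zero (𝕜 := ℝ)).eventually_lt_const hx
      filter_upwards [h1, eventually_ge_atTop x] with b hb1 hb2 using ⟨hb1, hb2⟩
    · exact fun _ => measurableSet_Ioc
  refine hcover.integral_eq_of_tendsto _ integrable_g ?_
  have hev : ∀ᶠ b : ℝ in atTop,
      (∫ x in Ioc b⁻¹ b, Real.sin x ^ 4 / x ^ 3 ∂(volume.restrict (Ioi 0)))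
        = (Hfn b - Hfn b⁻¹)
          + ((∫ u in 2*b⁻¹..4*b⁻¹, Real.cos u / u) - ∫ u in 2*b..4*b, Real.cos u / u) := by
    filter_upwards [eventually_ge_atTop (1:ℝ)] with b hb
    have hb0 : 0 < b := lt_of_lt_of_le one_pos hb
    have hε : 0 < b⁻¹ := inv_pos.2 hb0
    have hεb : b⁻¹ ≤ b := by
      rw [inv_eq_one_div, div_le_iff₀ hb0]; nlinarith
    have hsub : Ioc b⁻¹ b ⊆ Ioi (0:ℝ) := fun x hx => lt_trans hε hx.1
    rw [Measure.restrict_restrict measurableSet_Ioc, inter_eq_self_of_subset_left hsub,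
      ← intervalIntegral.integral_of_le hεb]
    exact key_formula hε hεb
  have hlim : Tendsto (fun b : ℝ => (Hfn b - Hfn b⁻¹)
      + ((∫ u in 2*b⁻¹..4*b⁻¹, Real.cos u / u) - ∫ u in 2*b..4*b, Real.cos u / u))
      atTop (𝓝 ((0 - 0) + (Real.log 2 - 0))) :=
    (Hfn_tendsto_atTop.sub Hfn_inv_tendsto).add (C_tendsto.sub D_tendsto)
  rw [show (0:ℝ) - 0 + (Real.log 2 - 0) = Real.log 2 by ring] at hlim
  exact Tendsto.congr' (hev.mono fun b h => h.symm) hlim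
end

section
/- Let n ≥ q ≥ 1 be integers. Then for ε > 0, ∫_ε^∞ sin(x)^n/x^q dx equals (1/(2i)^n) Σ_{k=0}^{⌊(n−1)/2⌋} (−1)^k C(n,k) [∫_ε^∞ (e^{i(n−2k)x} − P_{q−2}(i(n−2k)x))/x^q dx + (−1)^n ∫_ε^∞ (e^{−i(n−2k)x} − P_{q−2}(−i(n−2k)x))/x^q dx]. -/
open Filter Finset Complex

lemma fwdDiff_iter_pow_eq_zero : ∀ (j n : ℕ), j < n →
    (fwdDiff (1:ℕ))^[n] (fun k : ℕ => (k : ℂ) ^ j) = 0 := by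
  intro j
  induction j using Nat.strong_induction_on with
  | _ j IH =>
    intro n hjn
    obtain ⟨n, rfl⟩ : ∃ n', n = n' + 1 := ⟨n - 1, by omega⟩
    rw [Function.iterate_succ_apply]
    have hΔ : fwdDiff (1:ℕ) (fun k : ℕ => (k:ℂ) ^ j)
        = ∑ i ∈ range j, (j.choose i : ℂ) • (fun k : ℕ => (k:ℂ) ^ i) := by
      funext k
      simp only [fwdDiff, Finset.sum_apply, Pi.smul_apply, smul_eq_mul]
      have := add_pow (k:ℂ) 1 j
      simp only [one_pow, mul_one] at this
      rw [Nat.cast_add, Nat.cast_one, this, Finset.sum_range_succ]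
      simp [Nat.choose_self, mul_comm]
    rw [hΔ, fwdDiff_iter_finset_sum]
    refine Finset.sum_eq_zero fun i hi => ?_
    rw [Finset.mem_range] at hi
    rw [fwdDiff_iter_const_smul, IH i hi n (by omega)]
    simp

lemma alt_sum_theta (n j : ℕ) (h : j < n) :
    ∑ k ∈ range (n + 1), (-1 : ℂ) ^ k * (n.choose k : ℂ) * ((n : ℂ) - 2 * k) ^ j = 0 := by
  have hf : (fwdDiff (1:ℕ))^[n] (fun k : ℕ => ((n : ℂ) - 2 * k) ^ j) = 0 := by
    have hrep : (fun k : ℕ => ((n : ℂ) - 2 * k) ^ j)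
        = ∑ i ∈ range (j + 1), ((n:ℂ) ^ i * (-2 : ℂ) ^ (j - i) * (j.choose i : ℂ)) •
            (fun k : ℕ => (k:ℂ) ^ (j - i)) := by
      funext k
      simp only [Finset.sum_apply, Pi.smul_apply, smul_eq_mul]
      have : ((n : ℂ) - 2 * k) = (n : ℂ) + (-(2 * k)) := by ring
      rw [this, add_pow]
      refine Finset.sum_congr rfl fun i _ => ?_
      have h2 : (-(2 * (k:ℂ))) ^ (j - i) = (-2:ℂ) ^ (j-i) * (k:ℂ) ^ (j-i) := by
        rw [← neg_mul, mul_pow]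
      rw [h2]; ring
    rw [hrep, fwdDiff_iter_finset_sum]
    refine Finset.sum_eq_zero fun i hi => ?_
    rw [Finset.mem_range] at hi
    rw [fwdDiff_iter_const_smul, fwdDiff_iter_pow_eq_zero (j - i) n (by omega)]
    simp
  have h0 := fwdDiff_iter_eq_sum_shift (1:ℕ) (fun k : ℕ => ((n : ℂ) - 2 * k) ^ j) n 0
  rw [hf] at h0
  simp only [Pi.zero_apply, zero_add, smul_one_mul, zsmul_eq_mul, Int.cast_mul, Int.cast_pow,
    Int.cast_neg, Int.cast_one, Int.cast_natCast, smul_eq_mul] at h0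
  have key : ∀ k ∈ range (n + 1),
      (-1 : ℂ) ^ k * (n.choose k : ℂ) * ((n : ℂ) - 2 * k) ^ j
        = (-1 : ℂ) ^ n * ((-1 : ℂ) ^ (n - k) * (n.choose k : ℂ) * ((n : ℂ) - 2 * k) ^ j) := by
    intro k hk
    rw [Finset.mem_range] at hk
    have h1 : ((-1 : ℂ)) ^ n = (-1) ^ (n - k) * (-1) ^ k := by
      rw [← pow_add]; congr 1; omega
    have h2 : ((-1 : ℂ)) ^ (n - k) * (-1) ^ (n - k) = 1 := by
      rw [← pow_add]; exact Even.neg_one_pow ⟨n - k, rfl⟩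
    rw [h1]
    calc (-1 : ℂ) ^ k * (n.choose k : ℂ) * ((n : ℂ) - 2 * k) ^ j
        = ((-1:ℂ) ^ (n-k) * (-1) ^ (n-k)) * ((-1:ℂ)^k * (n.choose k : ℂ) * ((n : ℂ) - 2 * k) ^ j) := by
          rw [h2, one_mul]
      _ = _ := by ring
  rw [Finset.sum_congr rfl key, ← Finset.mul_sum]
  simp only [mul_one] at h0
  rw [← h0, mul_zero]

lemma half_sum_split (n : ℕ) (hn : 1 ≤ n) (g : ℕ → ℂ) :
    ∑ k ∈ range (n + 1), g k
      = (∑ k ∈ range ((n - 1) / 2 + 1), g k)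
        + (∑ k ∈ range ((n - 1) / 2 + 1), g (n - k))
        + (if Even n then g (n / 2) else 0) := by
  set m := (n - 1) / 2 with hm
  have hm1 : m + 1 ≤ n + 1 := by omega
  have hsplit : ∑ k ∈ range (n + 1), g k
      = (∑ k ∈ range (m + 1), g k) + ∑ k ∈ Ico (m + 1) (n + 1), g k := by
    rw [Finset.range_eq_Ico, ← Finset.sum_Ico_consecutive g (Nat.zero_le _) hm1, Finset.range_eq_Ico]
  have hIco : ∑ k ∈ Ico (m + 1) (n + 1), g k = ∑ j ∈ range (n - m), g (n - j) := by
    rw [Finset.sum_Ico_eq_sum_range]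
    have : (n + 1) - (m + 1) = n - m := by omega
    rw [this, ← Finset.sum_range_reflect]
    refine Finset.sum_congr rfl fun j hj => ?_
    rw [Finset.mem_range] at hj
    congr 1
    omega
  rcases Nat.even_or_odd n with he | ho
  · have hnm : n - m = m + 2 := by
      obtain ⟨t, rfl⟩ := he; omega
    have hmid : n - (m + 1) = n / 2 := by
      obtain ⟨t, ht⟩ := he; omega
    rw [hsplit, hIco, hnm, Finset.sum_range_succ (fun j => g (n - j)), hmid, if_pos he, add_assoc]
  · have hnm : n - m = m + 1 := by
      obtain ⟨t, ht⟩ := ho; omega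
    rw [hsplit, hIco, hnm, if_neg (by simpa using Nat.not_even_iff_odd.mpr ho), add_zero]

lemma exp_binom (n : ℕ) (x : ℂ) :
    (Complex.exp (Complex.I * x) - Complex.exp (-(Complex.I * x))) ^ n
      = ∑ k ∈ range (n + 1), (-1 : ℂ) ^ k * (n.choose k : ℂ)
          * Complex.exp (Complex.I * ((n : ℂ) - 2 * k) * x) := by
  have h1 : (Complex.exp (Complex.I * x) - Complex.exp (-(Complex.I * x))) ^ n
      = (-1 : ℂ) ^ n * (Complex.exp (-(Complex.I * x)) - Complex.exp (Complex.I * x)) ^ n := by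
    rw [← neg_sub, neg_pow]
  rw [h1, sub_pow, Finset.mul_sum]
  refine Finset.sum_congr rfl fun k hk => ?_
  rw [Finset.mem_range] at hk
  have hexp : Complex.exp (-(Complex.I * x)) ^ k * Complex.exp (Complex.I * x) ^ (n - k)
      = Complex.exp (Complex.I * ((n : ℂ) - 2 * k) * x) := by
    rw [← Complex.exp_nat_mul, ← Complex.exp_nat_mul, ← Complex.exp_add]
    congr 1
    have : ((n - k : ℕ) : ℂ) = (n : ℂ) - k := by
      rw [Nat.cast_sub (by omega)]
    rw [this]; ring
  have hsgn : (-1 : ℂ) ^ n * (-1 : ℂ) ^ (k + n) = (-1 : ℂ) ^ k := by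
    rw [← pow_add]
    have : n + (k + n) = k + 2 * n := by omega
    rw [this, pow_add, pow_mul, neg_one_sq, one_pow, mul_one]
  calc (-1:ℂ) ^ n * ((-1)^(k+n) * Complex.exp (-(Complex.I * x)) ^ k
          * Complex.exp (Complex.I * x) ^ (n - k) * (n.choose k : ℂ))
      = ((-1:ℂ)^n * (-1)^(k+n)) * (n.choose k : ℂ)
          * (Complex.exp (-(Complex.I * x)) ^ k * Complex.exp (Complex.I * x) ^ (n - k)) := by ring
    _ = _ := by rw [hsgn, hexp]


lemma P_zero_succ (m : ℕ) : P (m + 1) 0 = 1 := by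
  simp [P, Finset.sum_range_succ']

lemma hsin_aux (x : ℂ) : (2 * Complex.I) * Complex.sin x
    = Complex.exp (Complex.I * x) - Complex.exp (-(Complex.I * x)) := by
  rw [Complex.sin]
  have h2 : Complex.I * Complex.I = -1 := Complex.I_mul_I
  field_simp
  ring_nf
  rw [Complex.I_sq]
  ring

section key
variable (n q : ℕ)

noncomputable def hfun (x : ℂ) (k : ℕ) : ℂ :=
  (-1 : ℂ) ^ k * (n.choose k : ℂ) *
    (Complex.exp (Complex.I * ((n : ℂ) - 2 * k) * x)
      - P (q - 1) (Complex.I * ((n : ℂ) - 2 * k) * x))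

-- vanishing of the polynomial part over the full range
lemma hW (hq : 1 ≤ q) (hqn : q ≤ n) (x : ℂ) :
    ∑ k ∈ range (n + 1), (-1 : ℂ) ^ k * (n.choose k : ℂ)
      * P (q - 1) (Complex.I * ((n : ℂ) - 2 * k) * x) = 0 := by
  simp only [P, Finset.mul_sum]
  rw [Finset.sum_comm]
  refine Finset.sum_eq_zero fun j hj => ?_
  rw [Finset.mem_range] at hj
  have hterm : ∀ k ∈ range (n + 1),
      (-1 : ℂ) ^ k * (n.choose k : ℂ) * ((Complex.I * ((n : ℂ) - 2 * k) * x) ^ j / (j.factorial : ℂ))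
        = ((Complex.I ^ j * x ^ j) / (j.factorial : ℂ))
            * ((-1 : ℂ) ^ k * (n.choose k : ℂ) * ((n : ℂ) - 2 * k) ^ j) := by
    intro k _
    rw [mul_pow, mul_pow]
    ring
  rw [Finset.sum_congr rfl hterm, ← Finset.mul_sum,
    alt_sum_theta n j (by omega), mul_zero]

lemma key_identity (hq : 1 ≤ q) (hqn : q ≤ n) (x : ℂ) :
    (2 * Complex.I) ^ n * Complex.sin x ^ n
      = (∑ k ∈ range ((n - 1) / 2 + 1), (-1 : ℂ) ^ k * (n.choose k : ℂ) *
          ((Complex.exp (Complex.I * ((n : ℂ) - 2 * k) * x)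
              - P (q - 1) (Complex.I * ((n : ℂ) - 2 * k) * x))
            + (-1 : ℂ) ^ n * (Complex.exp (-(Complex.I * ((n : ℂ) - 2 * k) * x))
              - P (q - 1) (-(Complex.I * ((n : ℂ) - 2 * k) * x)))))
        + (if q = 1 ∧ Even n then (-1 : ℂ) ^ (n / 2) * (n.choose (n / 2) : ℂ) else 0) := by
  have hn : 1 ≤ n := le_trans hq hqn
  set m := (n - 1) / 2 with hm
  -- full sum of hfun equals (2I sin x)^n
  have hfull : ∑ k ∈ range (n + 1), hfun n q x k = (2 * Complex.I) ^ n * Complex.sin x ^ n := by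
    have : ∑ k ∈ range (n + 1), hfun n q x k
        = (∑ k ∈ range (n + 1), (-1 : ℂ) ^ k * (n.choose k : ℂ)
            * Complex.exp (Complex.I * ((n : ℂ) - 2 * k) * x))
          - ∑ k ∈ range (n + 1), (-1 : ℂ) ^ k * (n.choose k : ℂ)
            * P (q - 1) (Complex.I * ((n : ℂ) - 2 * k) * x) := by
      rw [← Finset.sum_sub_distrib]
      exact Finset.sum_congr rfl fun k _ => by rw [hfun]; ring
    rw [this, hW n q hq hqn, sub_zero, ← exp_binom, ← hsin_aux, mul_pow]
  -- pairing
  have hpair : ∀ k ∈ range (m + 1), hfun n q x (n - k)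
      = (-1 : ℂ) ^ k * (n.choose k : ℂ) *
          ((-1 : ℂ) ^ n * (Complex.exp (-(Complex.I * ((n : ℂ) - 2 * k) * x))
            - P (q - 1) (-(Complex.I * ((n : ℂ) - 2 * k) * x)))) := by
    intro k hk
    rw [Finset.mem_range] at hk
    have hkn : k ≤ n := by omega
    have harg : Complex.I * ((n : ℂ) - 2 * ((n - k : ℕ) : ℂ)) * x
        = -(Complex.I * ((n : ℂ) - 2 * k) * x) := by
      rw [Nat.cast_sub hkn]; ring
    have hsgn : (-1 : ℂ) ^ (n - k) = (-1) ^ n * (-1) ^ k := by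
      have h1 : ((-1 : ℂ)) ^ n = (-1) ^ (n - k) * (-1) ^ k := by
        rw [← pow_add]; congr 1; omega
      have h2 : ((-1 : ℂ)) ^ k * (-1) ^ k = 1 := by
        rw [← pow_add]; exact Even.neg_one_pow ⟨k, rfl⟩
      calc ((-1:ℂ))^(n-k) = (-1)^(n-k) * ((-1:ℂ)^k * (-1)^k) := by rw [h2, mul_one]
        _ = ((-1:ℂ)^(n-k) * (-1)^k) * (-1)^k := by ring
        _ = (-1)^n * (-1)^k := by rw [← h1]
    rw [hfun, harg, Nat.choose_symm hkn, hsgn]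
    ring
  have hHS := half_sum_split n hn (hfun n q x)
  -- middle term
  have hmid : (if Even n then hfun n q x (n / 2) else 0)
      = (if q = 1 ∧ Even n then (-1 : ℂ) ^ (n / 2) * (n.choose (n / 2) : ℂ) else 0) := by
    rcases Nat.even_or_odd n with he | ho
    · have hz : ((n : ℂ) - 2 * ((n / 2 : ℕ) : ℂ)) = 0 := by
        obtain ⟨t, ht⟩ := he
        subst ht
        have : (t + t) / 2 = t := by omega
        rw [this]
        push_cast
        ring
      rw [if_pos he, hfun, hz]
      simp only [mul_zero, zero_mul, Complex.exp_zero]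
      rcases Nat.eq_or_lt_of_le hq with h1 | h2
      · rw [if_pos ⟨h1.symm, he⟩, ← h1]
        simp [P]
      · rw [if_neg (by rintro ⟨rfl, -⟩; omega)]
        obtain ⟨q', rfl⟩ : ∃ q', q = q' + 2 := ⟨q - 2, by omega⟩
        have hP : P (q' + 2 - 1) 0 = 1 := P_zero_succ q'
        rw [hP]
        ring
    · rw [if_neg (by simpa using Nat.not_even_iff_odd.mpr ho),
        if_neg (by rintro ⟨-, h⟩; exact (Nat.not_even_iff_odd.mpr ho) h)]
  -- assemble
  have hsum : ∑ k ∈ range (m + 1), (-1 : ℂ) ^ k * (n.choose k : ℂ) *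
      ((Complex.exp (Complex.I * ((n : ℂ) - 2 * k) * x)
          - P (q - 1) (Complex.I * ((n : ℂ) - 2 * k) * x))
        + (-1 : ℂ) ^ n * (Complex.exp (-(Complex.I * ((n : ℂ) - 2 * k) * x))
          - P (q - 1) (-(Complex.I * ((n : ℂ) - 2 * k) * x))))
      = (∑ k ∈ range (m + 1), hfun n q x k) + ∑ k ∈ range (m + 1), hfun n q x (n - k) := by
    rw [← Finset.sum_add_distrib]
    refine Finset.sum_congr rfl fun k hk => ?_
    rw [hpair k hk, hfun]
    ring
  rw [hsum, ← hfull, hHS, hmid]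
end key

lemma cont_num (g : ℝ → ℂ) (hg : Continuous g) (j : ℕ) :
    Continuous fun x : ℝ => Complex.exp (g x) - P j (g x) := by
  have hP : Continuous (P j) := by
    apply continuous_finset_sum
    intro i _
    exact (continuous_pow i).div_const _
  exact (Complex.continuous_exp.comp hg).sub (hP.comp hg)

/-- Decomposition of `∫_ε^∞ sin(x)^n/x^q dx`: if `L` is this improper integral and for each
`k ≤ ⌊(n-1)/2⌋`, `A k = ∫_ε^∞ (e^{i(n-2k)x} − P_{q-2}(i(n-2k)x))/x^q dx` and
`B k = ∫_ε^∞ (e^{-i(n-2k)x} − P_{q-2}(-i(n-2k)x))/x^q dx`, then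
`L = (1/(2i)^n) ∑_k (-1)^k C(n,k) (A k + (-1)^n B k)`. -/
theorem integral_decomposition (n q : ℕ) (hq : 1 ≤ q) (hnq : q ≤ n) (ε : ℝ) (hε : 0 < ε)
    (L : ℂ) (A B : ℕ → ℂ)
    (hL : Tendsto (fun R : ℝ => ∫ x in ε..R, ((Real.sin x : ℂ)) ^ n / (x : ℂ) ^ q)
      atTop (nhds L))
    (hA : ∀ k ∈ Finset.range ((n - 1) / 2 + 1),
      Tendsto (fun R : ℝ => ∫ x in ε..R,
          (Complex.exp (Complex.I * ((n : ℂ) - 2 * k) * x)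
            - P (q - 1) (Complex.I * ((n : ℂ) - 2 * k) * x)) / (x : ℂ) ^ q)
        atTop (nhds (A k)))
    (hB : ∀ k ∈ Finset.range ((n - 1) / 2 + 1),
      Tendsto (fun R : ℝ => ∫ x in ε..R,
          (Complex.exp (-(Complex.I * ((n : ℂ) - 2 * k) * x))
            - P (q - 1) (-(Complex.I * ((n : ℂ) - 2 * k) * x))) / (x : ℂ) ^ q)
        atTop (nhds (B k))) :
    L = (1 / (2 * Complex.I) ^ n) *
        ∑ k ∈ Finset.range ((n - 1) / 2 + 1),
          (-1 : ℂ) ^ k * (n.choose k : ℂ) * (A k + (-1 : ℂ) ^ n * B k) := by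
  have hn : 1 ≤ n := le_trans hq hnq
  set m := (n - 1) / 2 with hm
  have h2I : ((2 * Complex.I) ^ n : ℂ) ≠ 0 :=
    pow_ne_zero _ (mul_ne_zero two_ne_zero Complex.I_ne_zero)
  set δ : ℂ := if q = 1 ∧ Even n then (-1 : ℂ) ^ (n / 2) * (n.choose (n / 2) : ℂ) else 0 with hδ
  set c : ℂ := (1 / (2 * Complex.I) ^ n) * δ with hc
  -- integrand functions
  set fA : ℕ → ℝ → ℂ := fun k x =>
    (Complex.exp (Complex.I * ((n : ℂ) - 2 * k) * x)
      - P (q - 1) (Complex.I * ((n : ℂ) - 2 * k) * x)) / (x : ℂ) ^ q with hfA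
  set fB : ℕ → ℝ → ℂ := fun k x =>
    (Complex.exp (-(Complex.I * ((n : ℂ) - 2 * k) * x))
      - P (q - 1) (-(Complex.I * ((n : ℂ) - 2 * k) * x))) / (x : ℂ) ^ q with hfB
  set G : ℝ → ℂ := fun R => (1 / (2 * Complex.I) ^ n) *
      ∑ k ∈ Finset.range (m + 1),
        (-1 : ℂ) ^ k * (n.choose k : ℂ)
          * ((∫ x in ε..R, fA k x) + (-1 : ℂ) ^ n * ∫ x in ε..R, fB k x) with hG
  set Rhs : ℂ := (1 / (2 * Complex.I) ^ n) *
      ∑ k ∈ Finset.range (m + 1),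
        (-1 : ℂ) ^ k * (n.choose k : ℂ) * (A k + (-1 : ℂ) ^ n * B k) with hRhs
  have hGlim : Tendsto G atTop (nhds Rhs) := by
    apply Tendsto.const_mul
    apply tendsto_finset_sum
    intro k hk
    exact ((hA k hk).add ((hB k hk).const_mul _)).const_mul _
  -- pointwise identity
  have hpt : ∀ x : ℝ, ((Real.sin x : ℂ)) ^ n / (x : ℂ) ^ q
      = (1 / (2 * Complex.I) ^ n) *
          (∑ k ∈ Finset.range (m + 1), (-1 : ℂ) ^ k * (n.choose k : ℂ)
            * (fA k x + (-1 : ℂ) ^ n * fB k x))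
        + c / (x : ℂ) ^ q := by
    intro x
    have hkey := key_identity n q hq hnq (x : ℂ)
    rw [Complex.ofReal_sin]
    have hsinpow : Complex.sin (x : ℂ) ^ n
        = ((∑ k ∈ Finset.range (m + 1), (-1 : ℂ) ^ k * (n.choose k : ℂ) *
            ((Complex.exp (Complex.I * ((n : ℂ) - 2 * k) * x)
                - P (q - 1) (Complex.I * ((n : ℂ) - 2 * k) * x))
              + (-1 : ℂ) ^ n * (Complex.exp (-(Complex.I * ((n : ℂ) - 2 * k) * x))
                - P (q - 1) (-(Complex.I * ((n : ℂ) - 2 * k) * x))))) + δ)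
          / (2 * Complex.I) ^ n := by
      rw [eq_div_iff h2I]
      rw [← hm] at hkey
      linear_combination hkey
    rw [hsinpow]
    have hS : ∑ k ∈ Finset.range (m + 1), (-1 : ℂ) ^ k * (n.choose k : ℂ)
          * (fA k x + (-1 : ℂ) ^ n * fB k x)
        = (∑ k ∈ Finset.range (m + 1), (-1 : ℂ) ^ k * (n.choose k : ℂ) *
            ((Complex.exp (Complex.I * ((n : ℂ) - 2 * k) * x)
                - P (q - 1) (Complex.I * ((n : ℂ) - 2 * k) * x))
              + (-1 : ℂ) ^ n * (Complex.exp (-(Complex.I * ((n : ℂ) - 2 * k) * x))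
                - P (q - 1) (-(Complex.I * ((n : ℂ) - 2 * k) * x))))) / (x : ℂ) ^ q := by
      rw [Finset.sum_div]
      refine Finset.sum_congr rfl fun k _ => ?_
      simp only [hfA, hfB]
      ring
    rw [hS, hc]
    ring
  -- integrability
  have hint : ∀ R : ℝ, ε ≤ R → ∀ g : ℝ → ℂ, Continuous g →
      IntervalIntegrable (fun x : ℝ => (Complex.exp (g x) - P (q - 1) (g x)) / (x : ℂ) ^ q)
        MeasureTheory.volume ε R := by
    intro R hR g hg
    apply ContinuousOn.intervalIntegrable
    apply ContinuousOn.div ((cont_num g hg (q - 1)).continuousOn)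
      ((Complex.continuous_ofReal.pow q).continuousOn)
    intro x hx
    rw [Set.uIcc_of_le hR] at hx
    exact pow_ne_zero _ (Complex.ofReal_ne_zero.mpr (by have := hx.1; intro h; rw [h] at this; linarith))
  have hintA : ∀ R : ℝ, ε ≤ R → ∀ k : ℕ,
      IntervalIntegrable (fA k) MeasureTheory.volume ε R := by
    intro R hR k
    exact hint R hR (fun x : ℝ => Complex.I * ((n : ℂ) - 2 * k) * x)
      (continuous_const.mul Complex.continuous_ofReal)
  have hintB : ∀ R : ℝ, ε ≤ R → ∀ k : ℕ,
      IntervalIntegrable (fB k) MeasureTheory.volume ε R := by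
    intro R hR k
    exact hint R hR (fun x : ℝ => -(Complex.I * ((n : ℂ) - 2 * k) * x))
      ((continuous_const.mul Complex.continuous_ofReal).neg)
  -- the main integral identity
  have hFG : ∀ R : ℝ, ε ≤ R →
      (∫ x in ε..R, ((Real.sin x : ℂ)) ^ n / (x : ℂ) ^ q)
        = G R + ∫ x in ε..R, c / (x : ℂ) ^ q := by
    intro R hR
    have hfun : (fun x : ℝ => ((Real.sin x : ℂ)) ^ n / (x : ℂ) ^ q)
        = fun x : ℝ => (1 / (2 * Complex.I) ^ n) *
            (∑ k ∈ Finset.range (m + 1), (-1 : ℂ) ^ k * (n.choose k : ℂ)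
              * (fA k x + (-1 : ℂ) ^ n * fB k x))
          + c / (x : ℂ) ^ q := funext hpt
    rw [hfun]
    have hTI : ∀ k ∈ Finset.range (m + 1), IntervalIntegrable
        (fun x => (-1 : ℂ) ^ k * (n.choose k : ℂ) * (fA k x + (-1 : ℂ) ^ n * fB k x))
        MeasureTheory.volume ε R := by
      intro k _
      exact ((hintA R hR k).add ((hintB R hR k).const_mul _)).const_mul _
    have hSI : IntervalIntegrable
        (fun x => ∑ k ∈ Finset.range (m + 1),
          (-1 : ℂ) ^ k * (n.choose k : ℂ) * (fA k x + (-1 : ℂ) ^ n * fB k x))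
        MeasureTheory.volume ε R := by
      have h1 := IntervalIntegrable.sum (Finset.range (m + 1))
        (f := fun k => fun x : ℝ => (-1 : ℂ) ^ k * (n.choose k : ℂ) * (fA k x + (-1 : ℂ) ^ n * fB k x))
        (μ := MeasureTheory.volume) (a := ε) (b := R) hTI
      have h2 : (∑ k ∈ Finset.range (m + 1),
            fun x : ℝ => (-1 : ℂ) ^ k * (n.choose k : ℂ) * (fA k x + (-1 : ℂ) ^ n * fB k x))
          = fun x : ℝ => ∑ k ∈ Finset.range (m + 1),
              (-1 : ℂ) ^ k * (n.choose k : ℂ) * (fA k x + (-1 : ℂ) ^ n * fB k x) := by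
        funext x
        simp [Finset.sum_apply]
      rwa [h2] at h1
    have hCI : IntervalIntegrable (fun x : ℝ => c / (x : ℂ) ^ q)
        MeasureTheory.volume ε R := by
      apply ContinuousOn.intervalIntegrable
      apply ContinuousOn.div continuousOn_const
        ((Complex.continuous_ofReal.pow q).continuousOn)
      intro x hx
      rw [Set.uIcc_of_le hR] at hx
      exact pow_ne_zero _ (Complex.ofReal_ne_zero.mpr
        (by have := hx.1; intro h; rw [h] at this; linarith))
    rw [intervalIntegral.integral_add (hSI.const_mul _) hCI,
      intervalIntegral.integral_const_mul,
      intervalIntegral.integral_finset_sum hTI]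
    congr 2
    refine Finset.sum_congr rfl fun k hk => ?_
    rw [intervalIntegral.integral_const_mul,
      intervalIntegral.integral_add (hintA R hR k) ((hintB R hR k).const_mul _),
      intervalIntegral.integral_const_mul]
  by_cases hcase : q = 1 ∧ Even n
  · -- degenerate case: contradiction
    exfalso
    obtain ⟨hq1, hev⟩ := hcase
    have hcne : c ≠ 0 := by
      rw [hc, hδ, if_pos ⟨hq1, hev⟩]
      refine mul_ne_zero (one_div_ne_zero h2I) (mul_ne_zero (pow_ne_zero _ ?_) ?_)
      · exact neg_ne_zero.mpr one_ne_zero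
      · exact_mod_cast (Nat.choose_pos (Nat.div_le_self n 2)).ne'
    have hlogint : ∀ R : ℝ, ε ≤ R →
        (∫ x in ε..R, c / (x : ℂ) ^ q) = c * ((Real.log (R / ε) : ℝ) : ℂ) := by
      intro R hR
      have h1 : (fun x : ℝ => c / (x : ℂ) ^ q) = fun x : ℝ => c * (((x⁻¹ : ℝ) : ℝ) : ℂ) := by
        funext x
        rw [hq1, pow_one, Complex.ofReal_inv, div_eq_mul_inv]
      rw [h1, intervalIntegral.integral_const_mul, intervalIntegral.integral_ofReal,
        integral_inv (by rw [Set.uIcc_of_le hR]; rintro ⟨h0, -⟩; linarith)]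
    have hdiff : Tendsto (fun R : ℝ => c * ((Real.log (R / ε) : ℝ) : ℂ))
        atTop (nhds (L - Rhs)) := by
      refine (hL.sub hGlim).congr' ?_
      filter_upwards [eventually_ge_atTop ε] with R hR
      rw [hFG R hR, hlogint R hR]
      ring
    have hlog : Tendsto (fun R : ℝ => ((Real.log (R / ε) : ℝ) : ℂ))
        atTop (nhds (c⁻¹ * (L - Rhs))) := by
      have := hdiff.const_mul c⁻¹
      refine this.congr fun R => ?_
      rw [inv_mul_cancel_left₀ hcne]
    have hlogre : Tendsto (fun R : ℝ => Real.log (R / ε))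
        atTop (nhds ((c⁻¹ * (L - Rhs)).re)) := by
      have := (Complex.continuous_re.tendsto _).comp hlog
      exact this.congr fun R => by simp
    have hdivat : Tendsto (fun R : ℝ => Real.log (R / ε)) atTop atTop :=
      Real.tendsto_log_atTop.comp (Tendsto.atTop_div_const hε tendsto_id)
    exact not_tendsto_nhds_of_tendsto_atTop hdivat _ hlogre
  · -- main case : c = 0
    have hc0 : c = 0 := by rw [hc, hδ, if_neg hcase, mul_zero]
    have hFG' : (fun R : ℝ => ∫ x in ε..R, ((Real.sin x : ℂ)) ^ n / (x : ℂ) ^ q) =ᶠ[atTop] G := by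
      filter_upwards [eventually_ge_atTop ε] with R hR
      rw [hFG R hR, hc0]
      simp
    have : Tendsto G atTop (nhds L) := hL.congr' hFG'
    exact tendsto_nhds_unique this hGlim
end
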